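/- Let A be an invertible l×l-matrix over a field, B an l×m-matrix, C an m×l-matrix, and D = (d_{ij}) an m×m-matrix. Let cⁱ denote the i-th row of C and b_j the j-th column of B. Let H be the m×m matrix whose (i,j)-entry is the determinant of the (l+1)×(l+1) bordered matrix [[A, b_j], [cⁱ, d_{ij}]]. Then det(H) = (det A)^{m−1} · det([[A, B], [C, D]]). -/

import Mathlib

/-- **Lemma (determinant of the matrix of bordered determinants).**
Let `A` be an invertible `l × l` matrix over a field, `B` an `l × m` matrix,
`C` an `m × l` matrix and `D = (d_{ij})` an `m × m` matrix.  Let `H` be the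
`m × m` matrix whose `(i,j)` entry is the determinant of the `(l+1) × (l+1)`
bordered matrix `[[A, b_j], [cⁱ, d_{ij}]]` where `b_j` is the `j`-th column of
`B` and `cⁱ` is the `i`-th row of `C`.  Then
`det H = (det A)^(m-1) * det [[A, B], [C, D]]`. -/
theorem det_matrix_of_bordered_dets
    {K : Type*} [Field K] {l m : ℕ}
    (A : Matrix (Fin l) (Fin l) K) (B : Matrix (Fin l) (Fin m) K)
    (C : Matrix (Fin m) (Fin l) K) (D : Matrix (Fin m) (Fin m) K)
    (hA : IsUnit A.det)
    (H : Matrix (Fin m) (Fin m) K)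
    (hH : ∀ i j, H i j =
      (Matrix.fromBlocks A
        (Matrix.of fun r (_ : Fin 1) => B r j)
        (Matrix.of fun (_ : Fin 1) s => C i s)
        (Matrix.of fun (_ : Fin 1) (_ : Fin 1) => D i j)).det) :
    H.det = A.det ^ ((m : ℤ) - 1) * (Matrix.fromBlocks A B C D).det := by
  have hAdet : A.det ≠ 0 := isUnit_iff_ne_zero.mp hA
  haveI := A.invertibleOfIsUnitDet hA
  have key : H = A.det • (D - C * A⁻¹ * B) := by
    ext i j
    rw [hH, Matrix.det_fromBlocks₁₁]
    simp [Matrix.det_fin_one, Matrix.mul_apply, Finset.mul_sum, mul_sub]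
  rw [key, Matrix.det_smul, Matrix.det_fromBlocks₁₁, Fintype.card_fin,
    zpow_sub₀ hAdet, zpow_natCast, zpow_one]
  field_simp
  rw [Matrix.invOf_eq_nonsing_inv]
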